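/- Let V be a valuation ring (an integral domain in which for all a, b, a divides b or b divides a) whose fraction field K is algebraically closed. Then V is a henselian local ring and its residue field is algebraically closed; that is, V is strictly henselian. -/
import Mathlib

open Polynomial

/-- In a valuation ring with algebraically closed fraction field, every monic polynomial
of positive degree has a root. -/
lemma valuationRing_monic_exists_root
    {V K : Type*} [CommRing V] [IsDomain V] [ValuationRing V]
    [Field K] [Algebra V K] [IsFractionRing V K] [IsAlgClosed K]
    (f : V[X]) (hf : f.Monic) (hd : 0 < f.natDegree) : ∃ r : V, f.IsRoot r := by
  have hinj : Function.Injective (algebraMap V K) := IsFractionRing.injective V K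
  have hmapdeg : (f.map (algebraMap V K)).degree ≠ 0 := by
    have h1 : (f.map (algebraMap V K)).natDegree = f.natDegree :=
      Polynomial.natDegree_map_eq_of_injective hinj f
    have : 0 < (f.map (algebraMap V K)).degree :=
      Polynomial.natDegree_pos_iff_degree_pos.mp (by omega)
    exact this.ne'
  obtain ⟨x, hx⟩ := IsAlgClosed.exists_root (f.map (algebraMap V K)) hmapdeg
  have hint : IsIntegral V x := ⟨f, hf, by rwa [← Polynomial.eval_map]⟩
  obtain ⟨r, hr⟩ := IsIntegrallyClosed.isIntegral_iff.mp hint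
  refine ⟨r, hinj ?_⟩
  rw [map_zero, ← Polynomial.eval₂_at_apply, ← Polynomial.eval_map, hr]
  exact hx

theorem valuationRing_strictly_henselian_of_algClosed_fractionField
    {V K : Type*} [CommRing V] [IsDomain V] [ValuationRing V]
    [Field K] [Algebra V K] [IsFractionRing V K] [IsAlgClosed K] :
    HenselianLocalRing V ∧ IsAlgClosed (IsLocalRing.ResidueField V) := by
  -- key: any monic polynomial with `f.eval a₀` in the maximal ideal has a root congruent to `a₀`
  have key : ∀ n (f : V[X]), f.natDegree ≤ n → f.Monic → ∀ a₀ : V,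
      f.eval a₀ ∈ IsLocalRing.maximalIdeal V →
      ∃ a : V, f.IsRoot a ∧ a - a₀ ∈ IsLocalRing.maximalIdeal V := by
    intro n
    induction n with
    | zero =>
      intro f hdeg hf a₀ hmem
      have : f = 1 := hf.natDegree_eq_zero.mp (Nat.le_zero.mp hdeg)
      subst this
      simp at hmem
    | succ n ih =>
      intro f hdeg hf a₀ hmem
      rcases Nat.eq_zero_or_pos f.natDegree with h0 | hpos
      · have : f = 1 := hf.natDegree_eq_zero.mp h0
        subst this
        simp at hmem
      obtain ⟨r, hr⟩ := valuationRing_monic_exists_root (K := K) f hf hpos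
      obtain ⟨g, hg⟩ := Polynomial.dvd_iff_isRoot.mpr hr
      have hgmonic : g.Monic := by
        have := hf
        rw [hg] at this
        exact (Polynomial.monic_X_sub_C r).of_mul_monic_left this
      have hgdeg : g.natDegree ≤ n := by
        have : f.natDegree = 1 + g.natDegree := by
          rw [hg, Polynomial.natDegree_mul (Polynomial.X_sub_C_ne_zero r) hgmonic.ne_zero,
            Polynomial.natDegree_X_sub_C]
        omega
      have heval : (a₀ - r) * g.eval a₀ ∈ IsLocalRing.maximalIdeal V := by
        have : f.eval a₀ = (a₀ - r) * g.eval a₀ := by simp [hg]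
        rwa [← this]
      have hprime : (IsLocalRing.maximalIdeal V).IsPrime := inferInstance
      rcases hprime.mem_or_mem heval with hcase | hcase
      · exact ⟨r, hr, by simpa using (IsLocalRing.maximalIdeal V).neg_mem hcase⟩
      · obtain ⟨a, ha, ha'⟩ := ih g hgdeg hgmonic a₀ hcase
        exact ⟨a, by simp [hg, Polynomial.IsRoot, ha.eq_zero], ha'⟩
  have hhens : HenselianLocalRing V := by
    refine ⟨fun f hf a₀ hmem _ => key f.natDegree f le_rfl hf a₀ hmem⟩
  refine ⟨hhens, ?_⟩
  -- residue field is algebraically closed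
  apply IsAlgClosed.of_exists_root
  intro p hp hirr
  have hsurj : Function.Surjective (IsLocalRing.residue V) := Ideal.Quotient.mk_surjective
  have hlift : p ∈ Polynomial.lifts (IsLocalRing.residue V) := by
    obtain ⟨q, hq⟩ := Polynomial.map_surjective _ hsurj p
    exact ⟨q, hq⟩
  obtain ⟨F, hFmap, hFdeg, hFmonic⟩ := Polynomial.lifts_and_degree_eq_and_monic hlift hp
  have hFpos : 0 < F.natDegree := by
    have : 0 < p.natDegree := hirr.natDegree_pos
    have h2 : F.natDegree = p.natDegree := Polynomial.natDegree_eq_of_degree_eq hFdeg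
    omega
  obtain ⟨r, hr⟩ := valuationRing_monic_exists_root (K := K) F hFmonic hFpos
  refine ⟨IsLocalRing.residue V r, ?_⟩
  rw [← hFmap, Polynomial.eval_map, Polynomial.eval₂_at_apply, hr.eq_zero, map_zero]
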